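/- arXiv:1812.05573 — 2 statements merged into one kernel-verified Lean document; each statement's English description precedes it below -/
import Mathlib

section
/- There exists a Borel probability measure \mu on [0,1] with supp \mu = [0,1] such that the quasi-lower Assouad dimension of \mu equals 0 while the lower local dimension of \mu satisfies \underline{dim}_{loc}\mu(x) \geq 1 for every x in [0,1]. -/
open MeasureTheory Metric Set Filter

def msupp (μ : Measure ℝ) : Set ℝ :=
  {x | ∀ r > 0, 0 < μ (ball x r)}

def lowerHSet (μ : Measure ℝ) (δ : ℝ) : Set ℝ :=
  {s | 0 ≤ s ∧ ∃ c₁ > (0:ℝ), ∃ c₂ > (0:ℝ), ∀ x ∈ msupp μ, ∀ r R : ℝ,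
    0 < r → 0 < R → r ≤ R ^ (1 + δ) → R ^ (1 + δ) ≤ c₁ →
    c₂ * (R / r) ^ s * (μ (ball x r)).toReal ≤ (μ (ball x R)).toReal}

noncomputable def dimqL (μ : Measure ℝ) : ℝ :=
  ⨅ δ : {δ : ℝ // 0 < δ}, sSup (lowerHSet μ δ.1)

noncomputable def lowerLocalDim (μ : Measure ℝ) (x : ℝ) : ℝ :=
  liminf (fun r => Real.log (μ (ball x r)).toReal / Real.log r) (nhdsWithin 0 (Set.Ioi 0))

open scoped ENNReal NNReal Classical

namespace QLC

noncomputable section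

def bb (n : ℕ) : ℝ := (1/2 : ℝ)^(n+3)
def aa (n : ℕ) : ℝ := (1/2 : ℝ)^(n*(n+3))
def dd (n : ℕ) : ℝ := (1/2 : ℝ)^((n-1)*(n+3))
def cc (n : ℕ) : ℝ := 3 * (1/2 : ℝ)^(n+1)

lemma half_pow_pos (k : ℕ) : (0:ℝ) < (1/2:ℝ)^k := by positivity
lemma half_pow_le_one (k : ℕ) : ((1/2:ℝ))^k ≤ 1 := pow_le_one₀ (by norm_num) (by norm_num)

lemma bb_pos (n : ℕ) : 0 < bb n := half_pow_pos _
lemma aa_pos (n : ℕ) : 0 < aa n := half_pow_pos _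
lemma dd_pos (n : ℕ) : 0 < dd n := half_pow_pos _
lemma bb_le_one (n : ℕ) : bb n ≤ 1 := half_pow_le_one _
lemma dd_le_one (n : ℕ) : dd n ≤ 1 := half_pow_le_one _

lemma dd_anti {m n : ℕ} (h : m ≤ n) : dd n ≤ dd m :=
  pow_le_pow_of_le_one (by norm_num) (by norm_num)
    (Nat.mul_le_mul (Nat.sub_le_sub_right h 1) (by omega))

lemma dd_mul_bb {n : ℕ} (hn : 1 ≤ n) : dd n * bb n = aa n := by
  rw [dd, bb, aa, ← pow_add]
  congr 1
  have : n - 1 + 1 = n := Nat.succ_pred_eq_of_pos hn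
  calc (n-1)*(n+3) + (n+3) = (n-1+1)*(n+3) := by ring
    _ = n*(n+3) := by rw [this]

lemma aa_le_bb {n : ℕ} (hn : 1 ≤ n) : aa n ≤ bb n :=
  pow_le_pow_of_le_one (by norm_num) (by norm_num) (by nlinarith)

lemma Jlo (n : ℕ) : cc n - bb n = 11/8 * (1/2:ℝ)^n := by
  simp only [cc, bb, pow_succ]; ring

lemma Jhi (n : ℕ) : cc n + bb n = 13/8 * (1/2:ℝ)^n := by
  simp only [cc, bb, pow_succ]; ring

lemma aa_eq_rpow (n : ℕ) : aa n = bb n ^ (n:ℝ) := by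
  rw [bb, ← Real.rpow_natCast ((1/2:ℝ)) (n+3), ← Real.rpow_mul (by norm_num), aa,
    ← Real.rpow_natCast ((1/2:ℝ)) (n*(n+3))]
  congr 1
  push_cast
  ring

def J (n : ℕ) : Set ℝ := Ioo (cc n - bb n) (cc n + bb n)
def Hv (n : ℕ) : Set ℝ := Ioo (cc n - aa n) (cc n + aa n)
def moat (n : ℕ) : Set ℝ := J n \ Hv n

lemma J_disjoint {m n : ℕ} (h : m < n) {y : ℝ} (hy : y ∈ J n) : y ∉ J m := by
  intro hy'
  have h1 : (1/2:ℝ)^n ≤ (1/2:ℝ)^(m+1) :=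
    pow_le_pow_of_le_one (by norm_num) (by norm_num) h
  have h2 : (1/2:ℝ)^(m+1) = (1/2:ℝ)^m * (1/2) := pow_succ _ _
  have hm := half_pow_pos m
  have := hy.2; have := hy'.1
  rw [Jhi] at *
  rw [Jlo] at *
  nlinarith

def g (n : ℕ) (y : ℝ) : ℝ≥0∞ := if y ∈ moat n then ENNReal.ofReal (dd n) else 1

def f (y : ℝ) : ℝ≥0∞ := Set.indicator (Ioo 0 1) (fun y => ⨅ k : ℕ, g (k+2) y) y

lemma measurable_moat (n : ℕ) : MeasurableSet (moat n) :=
  measurableSet_Ioo.diff measurableSet_Ioo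

lemma measurable_g (n : ℕ) : Measurable (g n) :=
  Measurable.ite (measurable_moat n) measurable_const measurable_const

lemma measurable_f : Measurable f := by
  unfold f
  exact (Measurable.iInf (fun k => measurable_g (k+2))).indicator measurableSet_Ioo

lemma g_le_one {n : ℕ} (y : ℝ) : g n y ≤ 1 := by
  unfold g; split
  · exact ENNReal.ofReal_le_one.2 (dd_le_one n)
  · exact le_refl _

lemma f_le_one (y : ℝ) : f y ≤ 1 := by
  unfold f
  classical
  by_cases h : y ∈ Ioo (0:ℝ) 1
  · rw [Set.indicator_of_mem h]
    exact le_trans (iInf_le _ 0) (g_le_one y)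
  · rw [Set.indicator_of_notMem h]; exact zero_le_one

lemma f_zero_outside {y : ℝ} (h : y ∉ Ioo (0:ℝ) 1) : f y = 0 :=
  Set.indicator_of_notMem h _

lemma J_subset_unit {n : ℕ} (hn : 1 ≤ n) : J n ⊆ Ioo (0:ℝ) 1 := by
  intro y hy
  have h1 := hy.1; have h2 := hy.2
  rw [Jlo] at h1; rw [Jhi] at h2
  have hp := half_pow_pos n
  have hle : (1/2:ℝ)^n ≤ (1/2:ℝ)^1 := pow_le_pow_of_le_one (by norm_num) (by norm_num) hn
  constructor <;> nlinarith

lemma f_on_moat {n : ℕ} (hn : 2 ≤ n) {y : ℝ} (hy : y ∈ moat n) :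
    f y ≤ ENNReal.ofReal (dd n) := by
  have hyu : y ∈ Ioo (0:ℝ) 1 := J_subset_unit (by omega) hy.1
  unfold f
  rw [Set.indicator_of_mem hyu]
  refine le_trans (iInf_le _ (n-2)) ?_
  have hn2 : n - 2 + 2 = n := by omega
  rw [hn2, g, if_pos hy]

lemma f_on_H {n : ℕ} (hn : 2 ≤ n) {y : ℝ} (hy : y ∈ Hv n) : 1 ≤ f y := by
  have hab := aa_le_bb (n := n) (by omega)
  have hyJ : y ∈ J n := by
    constructor
    · linarith [hy.1]
    · linarith [hy.2]
  have hyu : y ∈ Ioo (0:ℝ) 1 := J_subset_unit (by omega) hyJ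
  unfold f
  rw [Set.indicator_of_mem hyu]
  refine le_iInf fun k => ?_
  rw [g]
  rcases eq_or_ne (k+2) n with h | h
  · rw [if_neg]; intro hmem; exact hmem.2 (h ▸ hy)
  · rw [if_neg]; intro hmem
    rcases lt_or_gt_of_ne h with hlt | hgt
    · exact J_disjoint hlt hyJ hmem.1
    · exact J_disjoint hgt hmem.1 hyJ

lemma f_on_tail {M : ℕ} {y : ℝ} (hy : y ∈ Ioo ((1/2:ℝ)^M) 1) :
    ENNReal.ofReal (dd M) ≤ f y := by
  have hyu : y ∈ Ioo (0:ℝ) 1 := ⟨lt_trans (half_pow_pos M) hy.1, hy.2⟩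
  unfold f
  rw [Set.indicator_of_mem hyu]
  refine le_iInf fun k => ?_
  rw [g]
  split
  case isTrue hmem =>
    refine ENNReal.ofReal_le_ofReal (dd_anti ?_)
    -- show k + 2 ≤ M
    by_contra hc
    push_neg at hc
    have hup : y < 13/8 * (1/2:ℝ)^(k+2) := by rw [← Jhi]; exact hmem.1.2
    have h1 : (1/2:ℝ)^M < y := hy.1
    have h2 : (1/2:ℝ)^(k+1) ≤ (1/2:ℝ)^M :=
      pow_le_pow_of_le_one (by norm_num) (by norm_num) (by omega)
    have h3 : (1/2:ℝ)^(k+1) = 2 * (1/2:ℝ)^(k+2) := by rw [pow_succ]; ring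
    have := half_pow_pos (k+2)
    nlinarith
  case isFalse => exact ENNReal.ofReal_le_one.2 (dd_le_one M)

lemma f_on_right {y : ℝ} (hy : y ∈ Ioo (1/2:ℝ) 1) : 1 ≤ f y := by
  have hyu : y ∈ Ioo (0:ℝ) 1 := ⟨by linarith [hy.1], hy.2⟩
  unfold f
  rw [Set.indicator_of_mem hyu]
  refine le_iInf fun k => ?_
  rw [g, if_neg]
  intro hmem
  have hup : y < 13/8 * (1/2:ℝ)^(k+2) := by rw [← Jhi]; exact hmem.1.2
  have h2 : (1/2:ℝ)^(k+2) ≤ (1/2:ℝ)^2 :=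
    pow_le_pow_of_le_one (by norm_num) (by norm_num) (by omega)
  have h1 := hy.1
  nlinarith


def mm' : Measure ℝ := volume.withDensity f

lemma mu'_le_vol (S : Set ℝ) : mm' S ≤ volume S := by
  have h : mm' ≤ volume := by
    have h1 := withDensity_mono (μ := volume) (ae_of_all _ f_le_one)
    simpa [withDensity_one, mm'] using h1
  exact h S

lemma mu'_set_lower {S : Set ℝ} (hS : MeasurableSet S) {C : ℝ≥0∞} (h : ∀ y ∈ S, C ≤ f y) :
    C * volume S ≤ mm' S := by
  rw [mm', withDensity_apply f hS]
  calc C * volume S = ∫⁻ _ in S, C ∂volume := (setLIntegral_const S C).symm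
    _ ≤ ∫⁻ y in S, f y ∂volume := setLIntegral_mono measurable_f h

lemma mu'_set_upper {S : Set ℝ} (hS : MeasurableSet S) {C : ℝ≥0∞} (h : ∀ y ∈ S, f y ≤ C) :
    mm' S ≤ C * volume S := by
  rw [mm', withDensity_apply f hS]
  calc ∫⁻ y in S, f y ∂volume ≤ ∫⁻ _ in S, C ∂volume := setLIntegral_mono measurable_const h
    _ = C * volume S := setLIntegral_const S C

lemma f_le_ind (y : ℝ) : f y ≤ (Ioo (0:ℝ) 1).indicator (fun _ => 1) y := by
  by_cases h : y ∈ Ioo (0:ℝ) 1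
  · rw [Set.indicator_of_mem h]; exact f_le_one y
  · rw [f_zero_outside h]; exact zero_le

lemma mu'_univ_le : mm' univ ≤ 1 := by
  rw [mm', withDensity_apply f MeasurableSet.univ, Measure.restrict_univ]
  calc ∫⁻ y, f y ≤ ∫⁻ y, (Ioo (0:ℝ) 1).indicator (fun _ => 1) y := lintegral_mono f_le_ind
    _ = 1 * volume (Ioo (0:ℝ) 1) := lintegral_indicator_const measurableSet_Ioo 1
    _ = 1 := by simp [Real.volume_Ioo]

lemma mu'_ne_top (S : Set ℝ) : mm' S ≠ ⊤ :=
  ne_top_of_le_ne_top (by simp) (le_trans (measure_mono (subset_univ S)) mu'_univ_le)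

lemma mu'_univ_lower : ENNReal.ofReal (1/2) ≤ mm' univ := by
  have h := mu'_set_lower (S := Ioo (1/2:ℝ) 1) measurableSet_Ioo (C := 1)
    (fun y hy => f_on_right hy)
  rw [Real.volume_Ioo, one_mul] at h
  refine le_trans (le_of_eq ?_) (le_trans h (measure_mono (subset_univ _)))
  norm_num

def T : ℝ≥0∞ := mm' univ

lemma T_ne_zero : T ≠ 0 := by
  have : (0:ℝ≥0∞) < ENNReal.ofReal (1/2) := ENNReal.ofReal_pos.2 (by norm_num)
  exact ne_of_gt (lt_of_lt_of_le this mu'_univ_lower)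

lemma T_ne_top : T ≠ ⊤ := mu'_ne_top _

def mm : Measure ℝ := T⁻¹ • mm'

lemma mm_apply (S : Set ℝ) : mm S = T⁻¹ * mm' S := by
  rw [mm, Measure.smul_apply, smul_eq_mul]

lemma mm_prob : IsProbabilityMeasure mm :=
  ⟨by rw [mm_apply]; exact ENNReal.inv_mul_cancel T_ne_zero T_ne_top⟩

def tt : ℝ := (T⁻¹).toReal

lemma Tinv_ne_top : T⁻¹ ≠ ⊤ := ENNReal.inv_ne_top.2 T_ne_zero

lemma mm_toReal (S : Set ℝ) : (mm S).toReal = tt * (mm' S).toReal := by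
  rw [mm_apply, ENNReal.toReal_mul]; rfl

lemma tt_ge_one : 1 ≤ tt := by
  have h : (1:ℝ≥0∞) ≤ T⁻¹ := by
    rw [show (1:ℝ≥0∞) = 1⁻¹ by simp]
    exact ENNReal.inv_le_inv.2 mu'_univ_le
  have := ENNReal.toReal_mono Tinv_ne_top h
  simpa [tt, ENNReal.toReal_inv] using this

lemma tt_le_two : tt ≤ 2 := by
  have h : T⁻¹ ≤ 2 := by
    have h1 : T⁻¹ ≤ (ENNReal.ofReal (1/2))⁻¹ := ENNReal.inv_le_inv.2 mu'_univ_lower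
    refine le_trans h1 (le_of_eq ?_)
    rw [show (1/2 : ℝ) = (2:ℝ)⁻¹ by norm_num, ENNReal.ofReal_inv_of_pos (by norm_num), inv_inv]
    norm_num
  have := ENNReal.toReal_mono (by simp) h
  simpa [tt, ENNReal.toReal_inv] using this

lemma tt_pos : 0 < tt := lt_of_lt_of_le one_pos tt_ge_one

lemma measurable_Hv (n : ℕ) : MeasurableSet (Hv n) := measurableSet_Ioo

lemma lower_ball {n : ℕ} (hn : 2 ≤ n) {r : ℝ} (h : aa n ≤ r) :
    ENNReal.ofReal (2 * aa n) ≤ mm' (ball (cc n) r) := by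
  have hsub : Hv n ⊆ ball (cc n) r := by
    rw [Real.ball_eq_Ioo]
    intro y hy
    constructor
    · have := hy.1; linarith
    · have := hy.2; linarith
  refine le_trans ?_ (measure_mono hsub)
  have hlow := mu'_set_lower (measurable_Hv n) (C := 1) (fun y hy => f_on_H hn hy)
  refine le_trans (le_of_eq ?_) hlow
  rw [Hv, Real.volume_Ioo, one_mul]
  congr 1
  ring

lemma upper_ball {n : ℕ} (hn : 2 ≤ n) :
    mm' (ball (cc n) (bb n)) ≤ ENNReal.ofReal (4 * aa n) := by
  rw [Real.ball_eq_Ioo]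
  have hJ : Ioo (cc n - bb n) (cc n + bb n) = J n := rfl
  rw [hJ]
  have hsplit : J n ⊆ Hv n ∪ moat n := by
    intro y hy
    by_cases h : y ∈ Hv n
    · exact Or.inl h
    · exact Or.inr ⟨hy, h⟩
  refine le_trans (measure_mono hsplit) (le_trans (measure_union_le _ _) ?_)
  have h1 : mm' (Hv n) ≤ ENNReal.ofReal (2 * aa n) := by
    refine le_trans (mu'_le_vol _) ?_
    rw [Hv, Real.volume_Ioo]
    exact le_of_eq (by congr 1; ring)
  have h2 : mm' (moat n) ≤ ENNReal.ofReal (2 * aa n) := by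
    refine le_trans (mu'_set_upper (measurable_moat n) (fun y hy => f_on_moat hn hy)) ?_
    have hv : volume (moat n) ≤ ENNReal.ofReal (2 * bb n) := by
      refine le_trans (measure_mono diff_subset) ?_
      rw [J, Real.volume_Ioo]
      exact le_of_eq (by congr 1; ring)
    calc ENNReal.ofReal (dd n) * volume (moat n)
        ≤ ENNReal.ofReal (dd n) * ENNReal.ofReal (2 * bb n) := mul_le_mul_right hv _
      _ = ENNReal.ofReal (dd n * (2 * bb n)) := (ENNReal.ofReal_mul (le_of_lt (dd_pos n))).symm
      _ = ENNReal.ofReal (2 * aa n) := by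
          rw [show dd n * (2 * bb n) = 2 * (dd n * bb n) by ring, dd_mul_bb (by omega)]
  calc mm' (Hv n) + mm' (moat n)
      ≤ ENNReal.ofReal (2 * aa n) + ENNReal.ofReal (2 * aa n) := add_le_add h1 h2
    _ = ENNReal.ofReal (4 * aa n) := by
        rw [← ENNReal.ofReal_add (by linarith [aa_pos n]) (by linarith [aa_pos n])]; congr 1; ring

lemma ball_lower {x : ℝ} (hx : x ∈ Icc (0:ℝ) 1) :
    ∃ κ r₀ : ℝ, 0 < κ ∧ κ ≤ 1 ∧ 0 < r₀ ∧ r₀ ≤ 1 ∧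
      ∀ r, 0 < r → r < r₀ → ENNReal.ofReal (κ * r) ≤ mm' (ball x r) := by
  rcases eq_or_lt_of_le hx.1 with hx0 | hxpos
  · -- x = 0
    refine ⟨1/16, 1, by norm_num, by norm_num, by norm_num, le_refl 1, ?_⟩
    intro r hr hr1
    have hex : ∃ k : ℕ, (1/2:ℝ)^k ≤ r := by
      obtain ⟨k, hk⟩ := exists_pow_lt_of_lt_one hr (show (1/2:ℝ) < 1 by norm_num)
      exact ⟨k, le_of_lt hk⟩
    set k := Nat.find hex with hkdef
    have hk1 : (1/2:ℝ)^k ≤ r := Nat.find_spec hex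
    have hkpos : k ≠ 0 := by
      intro h
      rw [h] at hk1
      simp at hk1
      linarith
    have hk2 : r < (1/2:ℝ)^(k-1) := by
      have h := Nat.find_min hex (show k-1 < k by omega)
      push_neg at h
      exact h
    set p := (1/2:ℝ)^k with hp
    have hppos : 0 < p := half_pow_pos k
    have hk3 : (1/2:ℝ)^(k-1) = 2*p := by
      have h : p = (1/2:ℝ)^(k-1) * (1/2) := by
        rw [hp, ← pow_succ]
        congr 1
        omega
      rw [h]; ring
    have hfW : ∀ y ∈ Ioo (p/2) (11/16*p), (1:ℝ≥0∞) ≤ f y := by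
      intro y hy
      have hple : p ≤ 1 := half_pow_le_one k
      have hyu : y ∈ Ioo (0:ℝ) 1 := by
        constructor
        · nlinarith [hy.1]
        · nlinarith [hy.2]
      rw [f, Set.indicator_of_mem hyu]
      refine le_iInf fun j => ?_
      rw [g, if_neg]
      intro hmem
      have hJ1 : 11/8*(1/2:ℝ)^(j+2) < y := by rw [← Jlo]; exact hmem.1.1
      have hJ2 : y < 13/8*(1/2:ℝ)^(j+2) := by rw [← Jhi]; exact hmem.1.2
      set q := (1/2:ℝ)^(j+2) with hq
      have hqpos : 0 < q := half_pow_pos _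
      have hlt : q < p/2 := by nlinarith [hy.2]
      have hj : k+1 < j+2 := by
        by_contra hc
        push_neg at hc
        have hmono : (1/2:ℝ)^(k+1) ≤ (1/2:ℝ)^(j+2) :=
          pow_le_pow_of_le_one (by norm_num) (by norm_num) hc
        rw [pow_succ] at hmono
        rw [← hp] at hmono
        nlinarith
      have hq4 : q ≤ p/4 := by
        have hmono : (1/2:ℝ)^(j+2) ≤ (1/2:ℝ)^(k+2) :=
          pow_le_pow_of_le_one (by norm_num) (by norm_num) (by omega)
        have h42 : (1/2:ℝ)^(k+2) = p/4 := by rw [hp, pow_succ, pow_succ]; ring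
        rw [h42] at hmono
        exact hmono
      nlinarith [hy.1]
    have hWsub : Ioo (p/2) (11/16*p) ⊆ ball x r := by
      rw [Real.ball_eq_Ioo, ← hx0]
      intro y hy
      constructor
      · have := hy.1; nlinarith
      · have := hy.2; nlinarith
    refine le_trans ?_ (measure_mono hWsub)
    refine le_trans ?_ (mu'_set_lower measurableSet_Ioo (C := 1) hfW)
    rw [Real.volume_Ioo, one_mul]
    refine ENNReal.ofReal_le_ofReal ?_
    nlinarith
  · -- 0 < x
    obtain ⟨M, hM⟩ : ∃ M : ℕ, (1/2:ℝ)^M < x := exists_pow_lt_of_lt_one hxpos (by norm_num)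
    refine ⟨dd M, min (x - (1/2)^M) 1, dd_pos M, dd_le_one M,
      lt_min (by linarith) one_pos, min_le_right _ 1, ?_⟩
    intro r hr hrlt
    have hsub : Ioo (x - r) x ⊆ ball x r := by
      rw [Real.ball_eq_Ioo]
      intro y hy
      exact ⟨hy.1, lt_of_lt_of_le hy.2 (by linarith : x ≤ x + r)⟩
    have hsub2 : Ioo (x - r) x ⊆ Ioo ((1/2:ℝ)^M) 1 := by
      intro y hy
      constructor
      · have hrx : r < x - (1/2:ℝ)^M := lt_of_lt_of_le hrlt (min_le_left _ _)
        have := hy.1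
        linarith
      · exact lt_of_lt_of_le hy.2 hx.2
    refine le_trans ?_ (measure_mono hsub)
    refine le_trans ?_
      (mu'_set_lower measurableSet_Ioo (C := ENNReal.ofReal (dd M))
        (fun y hy => f_on_tail (hsub2 hy)))
    rw [Real.volume_Ioo, ← ENNReal.ofReal_mul (le_of_lt (dd_pos M))]
    exact ENNReal.ofReal_le_ofReal (le_of_eq (by ring))

lemma mu'_ball_pos {x : ℝ} (hx : x ∈ Icc (0:ℝ) 1) {r : ℝ} (hr : 0 < r) :
    0 < mm' (ball x r) := by
  obtain ⟨κ, r₀, hκ, hκ1, hr₀, hr₀1, hb⟩ := ball_lower hx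
  have hr' : 0 < min r (r₀/2) := lt_min hr (by linarith)
  have hlt : min r (r₀/2) < r₀ := lt_of_le_of_lt (min_le_right _ _) (by linarith)
  refine lt_of_lt_of_le ?_ (measure_mono (ball_subset_ball (min_le_left r (r₀/2))))
  refine lt_of_lt_of_le ?_ (hb _ hr' hlt)
  exact ENNReal.ofReal_pos.2 (by positivity)

lemma msupp_eq : msupp mm = Icc 0 1 := by
  ext x
  constructor
  · intro hx
    by_contra hxout
    simp only [mem_Icc, not_and_or, not_le] at hxout
    have hzero : ∃ r : ℝ, 0 < r ∧ ∀ y ∈ ball x r, y ∉ Ioo (0:ℝ) 1 := by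
      rcases hxout with h | h
      · refine ⟨-x, by linarith, ?_⟩
        intro y hy hy'
        rw [Real.ball_eq_Ioo] at hy
        have := hy.2
        have := hy'.1
        linarith
      · refine ⟨x - 1, by linarith, ?_⟩
        intro y hy hy'
        rw [Real.ball_eq_Ioo] at hy
        have := hy.1
        have := hy'.2
        linarith
    obtain ⟨r, hr, hdis⟩ := hzero
    have h0 : mm' (ball x r) = 0 := by
      have := mu'_set_upper (S := ball x r) measurableSet_ball (C := 0)
        (fun y hy => le_of_eq (f_zero_outside (hdis y hy)))
      simpa using this
    have := hx r hr
    rw [mm_apply, h0, mul_zero] at this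
    exact lt_irrefl 0 this
  · intro hx r hr
    rw [mm_apply]
    exact ENNReal.mul_pos (ENNReal.inv_ne_zero.2 T_ne_top) (ne_of_gt (mu'_ball_pos hx hr))




instance : IsProbabilityMeasure mm := mm_prob

lemma mm_ball_le {x r : ℝ} (hr : 0 < r) : (mm (ball x r)).toReal ≤ 4 * r := by
  rw [mm_toReal]
  have h1 : (mm' (ball x r)).toReal ≤ 2 * r := by
    have h := mu'_le_vol (ball x r)
    rw [Real.volume_ball] at h
    have h2 := ENNReal.toReal_mono ENNReal.ofReal_ne_top h
    rwa [ENNReal.toReal_ofReal (by linarith)] at h2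
  nlinarith [tt_le_two, tt_pos, ENNReal.toReal_nonneg (a := mm' (ball x r))]

lemma mm_ball_ge {x : ℝ} (hx : x ∈ Icc (0:ℝ) 1) :
    ∃ κ r₀ : ℝ, 0 < κ ∧ κ ≤ 1 ∧ 0 < r₀ ∧ r₀ ≤ 1 ∧
      ∀ r, 0 < r → r < r₀ → κ * r ≤ (mm (ball x r)).toReal := by
  obtain ⟨κ, r₀, hκ0, hκ1, hr₀0, hr₀1, hb⟩ := ball_lower hx
  refine ⟨κ, r₀, hκ0, hκ1, hr₀0, hr₀1, fun r h1 h2 => ?_⟩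
  rw [mm_toReal]
  have hv : κ * r ≤ (mm' (ball x r)).toReal :=
    (ENNReal.ofReal_le_iff_le_toReal (mu'_ne_top _)).1 (hb r h1 h2)
  nlinarith [tt_ge_one, ENNReal.toReal_nonneg (a := mm' (ball x r))]

lemma localdim {x : ℝ} (hx : x ∈ Icc (0:ℝ) 1) : 1 ≤ lowerLocalDim mm x := by
  obtain ⟨κ, r₀, hκ0, hκ1, hr₀0, hr₀1, hlow⟩ := mm_ball_ge hx
  set u : ℝ → ℝ := fun r => Real.log (mm (ball x r)).toReal / Real.log r with hu
  have hpos : ∀ r, 0 < r → r < r₀ → 0 < (mm (ball x r)).toReal :=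
    fun r h1 h2 => lt_of_lt_of_le (by positivity) (hlow r h1 h2)
  have hev2 : ∀ᶠ r in nhdsWithin (0:ℝ) (Ioi 0), u r ≤ 2 := by
    have hmem : Ioo (0:ℝ) (min r₀ κ) ∈ nhdsWithin (0:ℝ) (Ioi 0) :=
      Ioo_mem_nhdsGT_of_mem ⟨le_refl 0, lt_min hr₀0 hκ0⟩
    filter_upwards [hmem] with r hr
    have hr0 : 0 < r := hr.1
    have hrr : r < r₀ := lt_of_lt_of_le hr.2 (min_le_left _ _)
    have hrκ : r < κ := lt_of_lt_of_le hr.2 (min_le_right _ _)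
    have hr1 : r < 1 := lt_of_lt_of_le hrκ hκ1
    have hlogr : Real.log r < 0 := Real.log_neg hr0 hr1
    have h1 : Real.log (κ * r) ≤ Real.log (mm (ball x r)).toReal :=
      Real.log_le_log (by positivity) (hlow r hr0 hrr)
    have h2 : Real.log (κ * r) = Real.log κ + Real.log r :=
      Real.log_mul (ne_of_gt hκ0) (ne_of_gt hr0)
    have h3 : Real.log r ≤ Real.log κ := Real.log_le_log hr0 (le_of_lt hrκ)
    show Real.log (mm (ball x r)).toReal / Real.log r ≤ 2
    rw [div_le_iff_of_neg hlogr]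
    linarith
  have hcb : IsCoboundedUnder (· ≥ ·) (nhdsWithin (0:ℝ) (Ioi 0)) u :=
    Filter.IsBoundedUnder.isCoboundedUnder_ge ⟨2, eventually_map.2 hev2⟩
  have hliminf : ∀ ε : ℝ, 0 < ε → 1 - ε ≤ liminf u (nhdsWithin (0:ℝ) (Ioi 0)) := by
    intro ε hε
    refine Filter.le_liminf_of_le hcb ?_
    set r₁ := Real.exp (-(Real.log 4)/ε) with hr₁def
    have hr₁ : 0 < r₁ := Real.exp_pos _
    have hmem : Ioo (0:ℝ) (min r₀ (min r₁ 1)) ∈ nhdsWithin (0:ℝ) (Ioi 0) :=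
      Ioo_mem_nhdsGT_of_mem ⟨le_refl 0, lt_min hr₀0 (lt_min hr₁ one_pos)⟩
    filter_upwards [hmem] with r hr
    have hr0 : 0 < r := hr.1
    have hrr : r < r₀ := lt_of_lt_of_le hr.2 (min_le_left _ _)
    have hrr₁ : r < r₁ := lt_of_lt_of_le hr.2 (le_trans (min_le_right _ _) (min_le_left _ _))
    have hr1 : r < 1 := lt_of_lt_of_le hr.2 (le_trans (min_le_right _ _) (min_le_right _ _))
    have hlogr : Real.log r < 0 := Real.log_neg hr0 hr1
    have hμpos := hpos r hr0 hrr
    have hub : (mm (ball x r)).toReal ≤ 4*r := mm_ball_le hr0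
    have h1 : Real.log (mm (ball x r)).toReal ≤ Real.log (4*r) :=
      Real.log_le_log hμpos hub
    have h2 : Real.log (4*r) = Real.log 4 + Real.log r :=
      Real.log_mul (by norm_num) (ne_of_gt hr0)
    have h3 : Real.log r < -(Real.log 4)/ε := by
      have h := Real.log_lt_log hr0 hrr₁
      rwa [hr₁def, Real.log_exp] at h
    have h4 : Real.log r * ε < -Real.log 4 := (lt_div_iff₀ hε).1 h3
    show (1:ℝ) - ε ≤ Real.log (mm (ball x r)).toReal / Real.log r
    rw [le_div_iff_of_neg hlogr]
    nlinarith
  have hstep : ∀ ε : ℝ, 0 < ε → 1 ≤ liminf u (nhdsWithin (0:ℝ) (Ioi 0)) + ε :=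
    fun ε hε => by linarith [hliminf ε hε]
  exact le_of_forall_pos_le_add hstep

lemma zero_mem_lowerHSet {δ : ℝ} (hδ : 0 < δ) : (0:ℝ) ∈ lowerHSet mm δ := by
  refine ⟨le_refl 0, 1/2, by norm_num, 1, by norm_num, ?_⟩
  intro x _ r R hr hR hrR hRc
  have hR1 : R ≤ 1 := by
    by_contra hc
    push_neg at hc
    have h1 : (1:ℝ) < R ^ ((1:ℝ)+δ) := by
      calc (1:ℝ) < R := hc
        _ = R ^ (1:ℝ) := (Real.rpow_one R).symm
        _ ≤ R ^ (1+δ) := Real.rpow_le_rpow_of_exponent_le (le_of_lt hc) (by linarith)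
    linarith
  have hrR' : r ≤ R := by
    refine le_trans hrR ?_
    calc R ^ (1+δ) ≤ R ^ (1:ℝ) := Real.rpow_le_rpow_of_exponent_ge hR hR1 (by linarith)
      _ = R := Real.rpow_one R
  rw [Real.rpow_zero, one_mul, one_mul]
  exact ENNReal.toReal_mono (measure_ne_top mm _) (measure_mono (ball_subset_ball hrR'))

lemma pos_not_mem {δ s : ℝ} (hδ : 0 < δ) (hs : 0 < s) : s ∉ lowerHSet mm δ := by
  rintro ⟨-, c₁, hc₁, c₂, hc₂, Hyp⟩
  obtain ⟨n₁, hn₁⟩ := exists_pow_lt_of_lt_one hc₁ (show (1/2:ℝ) < 1 by norm_num)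
  have hqq0 : 0 < (1/2:ℝ) ^ (δ * s) := Real.rpow_pos_of_pos (by norm_num) _
  have hqq1 : (1/2:ℝ) ^ (δ * s) < 1 :=
    Real.rpow_lt_one (by norm_num) (by norm_num) (mul_pos hδ hs)
  obtain ⟨n₂, hn₂⟩ := exists_pow_lt_of_lt_one (show (0:ℝ) < c₂/4 by linarith) hqq1
  obtain ⟨n₃, hn₃⟩ := exists_nat_ge (1 + δ)
  set n := n₁ + n₂ + n₃ + 2 with hn
  have hn2 : 2 ≤ n := by omega
  have hδn : 1 + δ ≤ (n:ℝ) := by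
    refine le_trans hn₃ ?_
    exact_mod_cast Nat.cast_le.2 (show n₃ ≤ n by omega)
  have hB0 : 0 < bb n := bb_pos n
  have hB1 : bb n ≤ 1 := bb_le_one n
  have hr0 : 0 < bb n ^ ((1:ℝ) + δ) := Real.rpow_pos_of_pos hB0 _
  have hc₁' : bb n ^ ((1:ℝ)+δ) ≤ c₁ := by
    have h1 : bb n ^ ((1:ℝ)+δ) ≤ bb n ^ (1:ℝ) :=
      Real.rpow_le_rpow_of_exponent_ge hB0 hB1 (by linarith)
    rw [Real.rpow_one] at h1
    have h2 : bb n ≤ (1/2:ℝ)^n₁ := by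
      rw [bb]; exact pow_le_pow_of_le_one (by norm_num) (by norm_num) (by omega)
    exact le_trans h1 (le_trans h2 (le_of_lt hn₁))
  have hcx : cc n ∈ msupp mm := by
    rw [msupp_eq]
    constructor
    · rw [cc]; positivity
    · rw [cc]
      have h : (1/2:ℝ)^(n+1) ≤ (1/2:ℝ)^3 :=
        pow_le_pow_of_le_one (by norm_num) (by norm_num) (by omega)
      nlinarith
  have key := Hyp (cc n) hcx (bb n ^ ((1:ℝ)+δ)) (bb n) hr0 hB0 (le_refl _) hc₁'
  have haR : aa n ≤ bb n ^ ((1:ℝ)+δ) := by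
    rw [aa_eq_rpow]
    exact Real.rpow_le_rpow_of_exponent_ge hB0 hB1 hδn
  have hlo : 2 * aa n ≤ (mm (ball (cc n) (bb n ^ ((1:ℝ)+δ)))).toReal := by
    rw [mm_toReal]
    have h1 : 2*aa n ≤ (mm' (ball (cc n) (bb n ^ ((1:ℝ)+δ)))).toReal :=
      (ENNReal.ofReal_le_iff_le_toReal (mu'_ne_top _)).1 (lower_ball hn2 haR)
    nlinarith [tt_ge_one, ENNReal.toReal_nonneg (a := mm' (ball (cc n) (bb n ^ ((1:ℝ)+δ)))),
      aa_pos n]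
  have hhi : (mm (ball (cc n) (bb n))).toReal ≤ 2 * (4 * aa n) := by
    rw [mm_toReal]
    have h1 : (mm' (ball (cc n) (bb n))).toReal ≤ 4*aa n := by
      have h := ENNReal.toReal_mono ENNReal.ofReal_ne_top (upper_ball hn2)
      rwa [ENNReal.toReal_ofReal (by linarith [aa_pos n])] at h
    nlinarith [tt_le_two, tt_pos, ENNReal.toReal_nonneg (a := mm' (ball (cc n) (bb n)))]
  have hratio : (bb n / bb n ^ ((1:ℝ)+δ)) ^ s = (bb n ^ (δ*s))⁻¹ := by
    have h1 : bb n / bb n ^ ((1:ℝ)+δ) = bb n ^ (-δ : ℝ) := by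
      rw [show (-δ:ℝ) = 1 - (1+δ) by ring, Real.rpow_sub hB0, Real.rpow_one]
    rw [h1, ← Real.rpow_mul (le_of_lt hB0), show -δ * s = -(δ*s) by ring,
      Real.rpow_neg (le_of_lt hB0)]
  have hsmall : bb n ^ (δ*s) < c₂/4 := by
    have heq : bb n ^ (δ*s) = ((1/2:ℝ) ^ (δ*s)) ^ (n+3) := by
      rw [bb, ← Real.rpow_natCast (1/2:ℝ) (n+3), ← Real.rpow_mul (by norm_num),
        ← Real.rpow_natCast ((1/2:ℝ) ^ (δ*s)) (n+3), ← Real.rpow_mul (by norm_num)]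
      congr 1
      push_cast
      ring
    rw [heq]
    refine lt_of_le_of_lt ?_ hn₂
    exact pow_le_pow_of_le_one (le_of_lt hqq0) (le_of_lt hqq1) (by omega)
  have hq0 : 0 < bb n ^ (δ*s) := Real.rpow_pos_of_pos hB0 _
  rw [hratio] at key
  have hA : c₂ * (bb n ^ (δ*s))⁻¹ * (2*aa n) ≤ 2*(4*aa n) := by
    refine le_trans ?_ hhi
    refine le_trans (mul_le_mul_of_nonneg_left hlo ?_) key
    positivity
  have h8 : (4:ℝ) < c₂ * (bb n ^ (δ*s))⁻¹ := by
    rw [show c₂ * (bb n ^ (δ*s))⁻¹ = c₂ / (bb n ^ (δ*s)) by rw [div_eq_mul_inv]]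
    rw [lt_div_iff₀ hq0]
    linarith
  nlinarith [aa_pos n]

lemma lowerHSet_eq {δ : ℝ} (hδ : 0 < δ) : lowerHSet mm δ = {0} := by
  ext s
  simp only [mem_singleton_iff]
  constructor
  · intro hs
    by_contra hne
    have hpos : 0 < s := lt_of_le_of_ne hs.1 (Ne.symm hne)
    exact pos_not_mem hδ hpos hs
  · rintro rfl
    exact zero_mem_lowerHSet hδ

lemma dimqL_eq : dimqL mm = 0 := by
  haveI : Nonempty {δ : ℝ // 0 < δ} := ⟨⟨1, one_pos⟩⟩
  rw [dimqL]
  have h : ∀ δ : {δ : ℝ // 0 < δ}, sSup (lowerHSet mm δ.1) = 0 := fun δ => by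
    rw [lowerHSet_eq δ.2, csSup_singleton]
  rw [iInf_congr h]
  exact ciInf_const

end

end QLC

theorem exists_measure_quasi_lower_zero_local_dim_one :
    ∃ μ : Measure ℝ, IsProbabilityMeasure μ ∧ msupp μ = Set.Icc 0 1 ∧
      dimqL μ = 0 ∧ ∀ x ∈ Set.Icc (0:ℝ) 1, 1 ≤ lowerLocalDim μ x :=
  ⟨QLC.mm, QLC.mm_prob, QLC.msupp_eq, QLC.dimqL_eq, fun _ hx => QLC.localdim hx⟩
end

section
/- There exists a Borel probability measure \mu on [0,1] such that the lower Assouad dimension and upper Assouad dimension of \mu are both equal to 1, but \mu is not s-regular for any s \geq 0. -/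
open MeasureTheory Metric Set

def lowerASet (μ : Measure ℝ) : Set ℝ :=
  {s | 0 ≤ s ∧ ∃ c₁ > (0:ℝ), ∃ c₂ > (0:ℝ), ∀ x ∈ msupp μ, ∀ r R : ℝ,
    0 < r → r ≤ R → R ≤ c₁ →
    c₂ * (R / r) ^ s * (μ (ball x r)).toReal ≤ (μ (ball x R)).toReal}

def upperASet (μ : Measure ℝ) : Set ℝ :=
  {s | 0 ≤ s ∧ ∃ c₁ > (0:ℝ), ∃ c₂ > (0:ℝ), ∀ x ∈ msupp μ, ∀ r R : ℝ,
    0 < r → r ≤ R → R ≤ c₁ →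
    (μ (ball x R)).toReal ≤ c₂ * (R / r) ^ s * (μ (ball x r)).toReal}

/-- Lower Assouad dimension of a measure on `ℝ`. -/
noncomputable def dimL (μ : Measure ℝ) : ℝ := sSup (lowerASet μ)

/-- Upper Assouad dimension of a measure on `ℝ`. -/
noncomputable def dimA (μ : Measure ℝ) : ℝ := sInf (upperASet μ)

/-- `μ` is `s`-regular. -/
def IsSRegular (μ : Measure ℝ) (s : ℝ) : Prop :=
  ∃ c > (0:ℝ), ∀ x ∈ msupp μ, ∀ r : ℝ, 0 < r → r < diam (msupp μ) →
    ENNReal.ofReal (c⁻¹ * r ^ s) ≤ μ (ball x r) ∧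
    μ (ball x r) ≤ ENNReal.ofReal (c * r ^ s)


noncomputable def g (x : ℝ) : ℝ := x - x * Real.log x / 2

lemma g_zero : g 0 = 0 := by simp [g]

lemma g_one : g 1 = 1 := by simp [g]

lemma g_cont : Continuous g := by
  have h := Real.continuous_mul_log
  unfold g
  fun_prop

/-- key log inequality -/
lemma key_log {y x : ℝ} (hy : 0 ≤ y) (hyx : y ≤ x) :
    y * (Real.log x - Real.log y) ≤ x - y := by
  rcases eq_or_lt_of_le hy with h | h
  · simp [← h]; linarith
  · have hx : 0 < x := lt_of_lt_of_le h hyx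
    have h1 : Real.log (x / y) ≤ x / y - 1 := Real.log_le_sub_one_of_pos (by positivity)
    rw [Real.log_div (ne_of_gt hx) (ne_of_gt h)] at h1
    have := mul_le_mul_of_nonneg_left h1 hy
    calc y * (Real.log x - Real.log y) ≤ y * (x / y - 1) := this
    _ = x - y := by field_simp

/-- lower bound for increments of g -/
lemma gL {y x : ℝ} (hy : 0 ≤ y) (hyx : y ≤ x) :
    (x - y) * (1 - Real.log x) / 2 ≤ g x - g y := by
  have key := key_log hy hyx
  simp only [g]
  nlinarith [key]

/-- upper bound for increments of g -/
lemma gU {y b : ℝ} (hy : 0 < y) (hyb : y ≤ b) :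
    g b - g y ≤ (b - y) * (1 - Real.log y) / 2 := by
  have hb : 0 < b := lt_of_lt_of_le hy hyb
  have h1 : Real.log (y / b) ≤ y / b - 1 := Real.log_le_sub_one_of_pos (by positivity)
  rw [Real.log_div (ne_of_gt hy) (ne_of_gt hb)] at h1
  have h2 : b * (Real.log y - Real.log b) ≤ b * (y / b - 1) :=
    mul_le_mul_of_nonneg_left h1 hb.le
  have h3 : b * (y / b - 1) = y - b := by field_simp
  rw [h3] at h2
  -- so b - y ≤ b * (log b - log y)
  simp only [g]
  nlinarith [h2]

lemma g_monoOn : MonotoneOn g (Icc (0:ℝ) 1) := by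
  intro a ha b hb hab
  have := gL ha.1 hab
  have hlb : Real.log b ≤ 0 := Real.log_nonpos (le_trans ha.1 hab) hb.2
  nlinarith [this]

noncomputable def Fc (x : ℝ) : ℝ := g (min (max x 0) 1)

lemma clamp_mem (x : ℝ) : min (max x 0) 1 ∈ Icc (0:ℝ) 1 :=
  ⟨le_min (le_max_right x 0) zero_le_one, min_le_right _ _⟩

lemma Fc_mono : Monotone Fc := by
  intro a b hab
  exact g_monoOn (clamp_mem a) (clamp_mem b)
    (min_le_min (max_le_max hab le_rfl) le_rfl)

lemma Fc_cont : Continuous Fc :=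
  g_cont.comp ((continuous_id.max continuous_const).min continuous_const)

lemma Fc_eq {x : ℝ} (h0 : 0 ≤ x) (h1 : x ≤ 1) : Fc x = g x := by
  simp [Fc, max_eq_left h0, min_eq_left h1]

lemma Fc_eq' {x : ℝ} (h0 : 0 ≤ x) : Fc x = g (min x 1) := by
  simp [Fc, max_eq_left h0]

lemma Fc_of_nonpos {x : ℝ} (h : x ≤ 0) : Fc x = 0 := by
  simp [Fc, max_eq_right h, g_zero]

lemma Fc_of_one_le {x : ℝ} (h : 1 ≤ x) : Fc x = 1 := by
  have : max x 0 = x := max_eq_left (le_trans zero_le_one h)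
  simp [Fc, this, min_eq_right h, g_one]

lemma Fc_nonneg (x : ℝ) : 0 ≤ Fc x := by
  have := g_monoOn (show (0:ℝ) ∈ Icc (0:ℝ) 1 by norm_num) (clamp_mem x) (clamp_mem x).1
  simpa [Fc, g_zero] using this

lemma Fc_le_one (x : ℝ) : Fc x ≤ 1 := by
  have := g_monoOn (clamp_mem x) (show (1:ℝ) ∈ Icc (0:ℝ) 1 by norm_num) (clamp_mem x).2
  simpa [Fc, g_one] using this

noncomputable def sF : StieltjesFunction ℝ where
  toFun := Fc
  mono' := Fc_mono
  right_continuous' := fun x => (Fc_cont.continuousAt).continuousWithinAt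

lemma sF_apply (x : ℝ) : sF x = Fc x := rfl

noncomputable def myμ : Measure ℝ := sF.measure

instance : IsProbabilityMeasure myμ := by
  constructor
  have hbot : Filter.Tendsto (⇑sF) Filter.atBot (nhds 0) := by
    apply Filter.Tendsto.congr' _ tendsto_const_nhds
    filter_upwards [Filter.eventually_le_atBot (0:ℝ)] with x hx
    exact (Fc_of_nonpos hx).symm
  have htop : Filter.Tendsto (⇑sF) Filter.atTop (nhds 1) := by
    apply Filter.Tendsto.congr' _ tendsto_const_nhds
    filter_upwards [Filter.eventually_ge_atTop (1:ℝ)] with x hx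
    exact (Fc_of_one_le hx).symm
  rw [myμ, sF.measure_univ hbot htop]
  norm_num

lemma meas_ball (x r : ℝ) : myμ (ball x r) = ENNReal.ofReal (Fc (x + r) - Fc (x - r)) := by
  rw [Real.ball_eq_Ioo, myμ, sF.measure_Ioo]
  congr 1
  rw [leftLim_eq_of_tendsto (α := ℝ) (f := ⇑sF) (Fc_cont.continuousAt.continuousWithinAt)]
  · rfl

lemma mB_eq (x : ℝ) {r : ℝ} (hr : 0 ≤ r) : (myμ (ball x r)).toReal = Fc (x + r) - Fc (x - r) := by
  rw [meas_ball, ENNReal.toReal_ofReal]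
  exact sub_nonneg.2 (Fc_mono (by linarith : x - r ≤ x + r))

/-- Main lower estimate -/
lemma ML {x r : ℝ} (hx0 : 0 ≤ x) (hx1 : x ≤ 1) (hr : 0 < r) (hr1 : r ≤ 1) :
    r * (2 - Real.log (max x r)) / 8 ≤ Fc (x + r) - Fc (x - r) := by
  set a := max x r with ha
  have ha0 : 0 < a := lt_of_lt_of_le hr (le_max_right x r)
  have ha1 : a ≤ 1 := max_le hx1 hr1
  have hra : r ≤ a := le_max_right x r
  have hxa : x ≤ a := le_max_left x r
  have hL : Real.log a ≤ 0 := Real.log_nonpos ha0.le ha1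
  have h1 : Fc a - Fc (a - r) ≤ Fc (x + r) - Fc (x - r) := by
    have e1 : Fc a ≤ Fc (x + r) := Fc_mono (by
      rcases max_cases x r with ⟨h, _⟩ | ⟨h, _⟩ <;> rw [← ha] at * <;> linarith)
    have e2 : Fc (x - r) ≤ Fc (a - r) := Fc_mono (by linarith)
    linarith
  have e3 : Fc a = g a := Fc_eq ha0.le ha1
  have e4 : Fc (a - r) = g (a - r) := Fc_eq (by linarith) (by linarith)
  have e5 := gL (y := a - r) (x := a) (by linarith) (by linarith)
  have e6 : r * (2 - Real.log a) / 8 ≤ r * (1 - Real.log a) / 2 := by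
    nlinarith [mul_nonneg hr.le (by linarith : (0:ℝ) ≤ 2 - 3 * Real.log a)]
  rw [e3, e4] at h1
  have : (a - (a - r)) * (1 - Real.log a) / 2 = r * (1 - Real.log a) / 2 := by ring_nf
  linarith [e5, this ▸ e5]

/-- Main upper estimate -/
lemma MU {x r : ℝ} (hx0 : 0 ≤ x) (hx1 : x ≤ 1) (hr : 0 < r) (hr1 : r ≤ 1) :
    Fc (x + r) - Fc (x - r) ≤ 8 * (r * (2 - Real.log (max x r))) := by
  set a := max x r with ha
  have ha0 : 0 < a := lt_of_lt_of_le hr (le_max_right x r)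
  have ha1 : a ≤ 1 := max_le hx1 hr1
  have hL : Real.log a ≤ 0 := Real.log_nonpos ha0.le ha1
  have hlog2 : Real.log 2 ≤ 1 := by
    have := Real.log_two_lt_d9; linarith
  rcases le_or_gt (2 * r) x with hc | hc
  · -- case A : x ≥ 2r, a = x
    have hax : a = x := max_eq_left (by linarith)
    set y := x - r with hy
    have hy0 : 0 < y := by simp only [hy]; linarith
    set b := min (x + r) 1 with hb
    have hyb : y ≤ b := le_min (by linarith) (by linarith)
    have e1 : Fc (x + r) = g b := Fc_eq' (by linarith)
    have e2 : Fc (x - r) = g y := Fc_eq (by linarith) (by linarith)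
    have e3 := gU hy0 hyb
    have hby : b - y ≤ 2 * r := by
      have : b ≤ x + r := min_le_left _ _
      simp only [hy]; linarith
    have hx0' : 0 < x := by linarith
    have hylog : Real.log x - Real.log 2 ≤ Real.log y := by
      have h1 : Real.log (x / 2) ≤ Real.log y := by
        apply Real.log_le_log (by linarith)
        simp only [hy]; linarith
      rwa [Real.log_div (ne_of_gt hx0') (by norm_num)] at h1
    have hylog0 : Real.log y ≤ 0 := Real.log_nonpos hy0.le (by simp only [hy]; linarith)
    have h4 : (b - y) * (1 - Real.log y) ≤ (2 * r) * (1 + Real.log 2 - Real.log x) := by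
      apply mul_le_mul hby (by linarith) (by linarith) (by positivity)
    rw [e1, e2]
    have h5 : (2 * r) * (1 + Real.log 2 - Real.log x) ≤ 8 * (r * (2 - Real.log a)) := by
      rw [hax]
      nlinarith [mul_nonneg hr.le (by linarith : (0:ℝ) ≤ 15 - Real.log 2 - 7 * Real.log x)]
    have hnn : 0 ≤ r * (2 - Real.log a) := mul_nonneg hr.le (by linarith)
    clear_value a y b
    linarith [e3, h4, h5, hnn]
  · -- case B : x < 2r
    have hFm : Fc (x + r) - Fc (x - r) ≤ Fc (x + r) := by
      linarith [Fc_nonneg (x - r)]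
    rcases le_or_gt (3 * r) 1 with h3 | h3
    · have e1 : Fc (x + r) ≤ Fc (3 * r) := Fc_mono (by linarith)
      have e2 : Fc (3 * r) = g (3 * r) := Fc_eq (by linarith) h3
      have hlr : Real.log r ≤ Real.log (3 * r) := Real.log_le_log hr (by linarith)
      have hla : Real.log a ≤ Real.log 2 + Real.log r := by
        have h1 : Real.log a ≤ Real.log (2 * r) := Real.log_le_log ha0 (by
          rcases max_cases x r with ⟨h, _⟩ | ⟨h, _⟩ <;> rw [← ha] at * <;> linarith)
        rwa [Real.log_mul (by norm_num) (ne_of_gt hr)] at h1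
      have hlr0 : Real.log r ≤ 0 := Real.log_nonpos hr.le hr1
      have e3 : 2 - Real.log (3 * r) ≤ (16/3) * (2 - Real.log a) := by linarith
      have e4 : g (3 * r) = (3 * r) * (2 - Real.log (3 * r)) / 2 := by simp only [g]; ring
      have e5 : (3 * r) * (2 - Real.log (3 * r)) / 2 ≤ (3 * r) * ((16/3) * (2 - Real.log a)) / 2 := by
        have := mul_le_mul_of_nonneg_left e3 (by positivity : (0:ℝ) ≤ 3 * r)
        linarith
      have e6 : (3 * r) * ((16/3) * (2 - Real.log a)) / 2 = 8 * (r * (2 - Real.log a)) := by ring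
      linarith [hFm, e1, e2 ▸ e1]
    · have h13 : (1:ℝ)/3 < r := by linarith
      have e7 : (1:ℝ)/3 * 2 ≤ r * (2 - Real.log a) := by
        apply mul_le_mul h13.le (by linarith) (by norm_num) hr.le
      linarith [Fc_le_one (x + r), hFm]

lemma mB_lower {x r : ℝ} (hx0 : 0 ≤ x) (hx1 : x ≤ 1) (hr : 0 < r) (hr1 : r ≤ 1) :
    r * (2 - Real.log (max x r)) / 8 ≤ (myμ (ball x r)).toReal := by
  rw [mB_eq x hr.le]; exact ML hx0 hx1 hr hr1

lemma mB_upper {x r : ℝ} (hx0 : 0 ≤ x) (hx1 : x ≤ 1) (hr : 0 < r) (hr1 : r ≤ 1) :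
    (myμ (ball x r)).toReal ≤ 8 * (r * (2 - Real.log (max x r))) := by
  rw [mB_eq x hr.le]; exact MU hx0 hx1 hr hr1

lemma phi_pos {x r : ℝ} (hx0 : 0 ≤ x) (hx1 : x ≤ 1) (hr : 0 < r) (hr1 : r ≤ 1) :
    0 < r * (2 - Real.log (max x r)) := by
  have ha1 : max x r ≤ 1 := max_le hx1 hr1
  have hL : Real.log (max x r) ≤ 0 :=
    Real.log_nonpos (le_trans hx0 (le_max_left x r)) ha1
  have : 0 < 2 - Real.log (max x r) := by linarith
  positivity

lemma Icc_subset_msupp : Icc (0:ℝ) 1 ⊆ msupp myμ := by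
  intro x hx r hr
  have hr' : 0 < min r 1 := lt_min hr one_pos
  have hr'1 : min r 1 ≤ 1 := min_le_right r 1
  have h1 := mB_lower hx.1 hx.2 hr' hr'1
  have h2 := phi_pos hx.1 hx.2 hr' hr'1
  have hpos : 0 < (myμ (ball x (min r 1))).toReal := lt_of_lt_of_le (by linarith) h1
  have h3 : 0 < myμ (ball x (min r 1)) := by
    by_contra h
    push_neg at h
    have : myμ (ball x (min r 1)) = 0 := le_antisymm h (zero_le)
    rw [this] at hpos; simp at hpos
  exact lt_of_lt_of_le h3 (measure_mono (ball_subset_ball (min_le_left r 1)))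

lemma msupp_subset_Icc : msupp myμ ⊆ Icc (0:ℝ) 1 := by
  intro x hx
  by_contra h
  simp only [mem_Icc, not_and_or, not_le] at h
  rcases h with h | h
  · have hr : (0:ℝ) < -x := by linarith
    have := hx (-x) hr
    have hz : myμ (ball x (-x)) = 0 := by
      rw [meas_ball]
      have e1 : Fc (x + -x) = 0 := by rw [show x + -x = 0 by ring, Fc_of_nonpos le_rfl]
      have e2 : Fc (x - -x) = 0 := Fc_of_nonpos (by linarith)
      rw [e1, e2]; simp
    rw [hz] at this; exact lt_irrefl 0 this
  · have hr : (0:ℝ) < x - 1 := by linarith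
    have := hx (x - 1) hr
    have hz : myμ (ball x (x - 1)) = 0 := by
      rw [meas_ball]
      have e1 : Fc (x + (x - 1)) = 1 := Fc_of_one_le (by linarith)
      have e2 : Fc (x - (x - 1)) = 1 := by rw [show x - (x-1) = 1 by ring, Fc_of_one_le le_rfl]
      rw [e1, e2]; simp
    rw [hz] at this; exact lt_irrefl 0 this

lemma log_max_mono {x r R : ℝ} (hx0 : 0 ≤ x) (hr : 0 < r) (hrR : r ≤ R) :
    Real.log (max x r) ≤ Real.log (max x R) :=
  Real.log_le_log (lt_of_lt_of_le hr (le_max_right x r))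
    (max_le_max le_rfl hrR)

/-- 1 is in the upper Assouad set -/
lemma one_mem_upper : (1:ℝ) ∈ upperASet myμ := by
  refine ⟨zero_le_one, 1, one_pos, 64, by norm_num, ?_⟩
  intro x hx r R hr hrR hR1
  have hxI := msupp_subset_Icc hx
  have hR : 0 < R := lt_of_lt_of_le hr hrR
  have hr1 : r ≤ 1 := le_trans hrR hR1
  have h1 := mB_upper hxI.1 hxI.2 hR hR1
  have h2 := mB_lower hxI.1 hxI.2 hr hr1
  have hlog := log_max_mono hxI.1 hr hrR
  have e1 : (R / r) ^ (1:ℝ) = R / r := Real.rpow_one _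
  rw [e1]
  have key : R * (2 - Real.log (max x R)) ≤ (R / r) * (r * (2 - Real.log (max x r))) := by
    have : (R / r) * (r * (2 - Real.log (max x r))) = R * (2 - Real.log (max x r)) := by
      field_simp
    rw [this]
    have : 2 - Real.log (max x R) ≤ 2 - Real.log (max x r) := by linarith
    exact mul_le_mul_of_nonneg_left this hR.le
  calc (myμ (ball x R)).toReal ≤ 8 * (R * (2 - Real.log (max x R))) := h1
    _ ≤ 8 * ((R / r) * (r * (2 - Real.log (max x r)))) := by linarith
    _ = 64 * (R / r) * (r * (2 - Real.log (max x r)) / 8) := by ring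
    _ ≤ 64 * (R / r) * (myμ (ball x r)).toReal := by
        apply mul_le_mul_of_nonneg_left h2
        have : 0 < R / r := div_pos hR hr
        positivity



/-- membership in the lower Assouad set for s < 1 -/
lemma mem_lower {s : ℝ} (hs0 : 0 ≤ s) (hs1 : s < 1) : s ∈ lowerASet myμ := by
  have hcm : 0 < min 1 (2 * (1 - s)) := lt_min one_pos (by linarith)
  refine ⟨hs0, 1, one_pos, min 1 (2 * (1 - s)) / 64, by positivity, ?_⟩
  intro x hx r R hr hrR hR1
  have hxI := msupp_subset_Icc hx
  have hR : 0 < R := lt_of_lt_of_le hr hrR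
  have hr1 : r ≤ 1 := le_trans hrR hR1
  have h1 := mB_upper hxI.1 hxI.2 hr hr1
  have h2 := mB_lower hxI.1 hxI.2 hR hR1
  have ha0 : 0 < max x r := lt_of_lt_of_le hr (le_max_right x r)
  have hA0 : 0 < max x R := lt_of_lt_of_le hR (le_max_right x R)
  have hA1 : max x R ≤ 1 := max_le hxI.2 hR1
  have hu : Real.log (max x r) ≤ Real.log (max x R) := log_max_mono hxI.1 hr hrR
  have ht : Real.log (max x R) ≤ 0 := Real.log_nonpos hA0.le hA1
  -- (max x R) / (max x r) ≤ R / r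
  have hAr : (max x R) * r ≤ R * (max x r) := by
    rcases le_total x R with h | h
    · rw [max_eq_right h]
      exact mul_le_mul_of_nonneg_left (le_max_right x r) hR.le
    · rw [max_eq_left h, max_eq_left (le_trans hrR h)]
      calc x * r ≤ x * R := mul_le_mul_of_nonneg_left hrR (le_trans hR.le h)
        _ = R * x := by ring
  have hdiv : (max x R) / (max x r) ≤ R / r := by
    rw [div_le_div_iff₀ ha0 hr]
    linarith
  -- (R/r)^(1-s) ≥ 1 + (1-s) * (log A - log a)
  have hP : 1 + (1 - s) * (Real.log (max x R) - Real.log (max x r)) ≤ (R / r) ^ (1 - s) := by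
    have e1 : ((max x R) / (max x r)) ^ (1 - s) ≤ (R / r) ^ (1 - s) :=
      Real.rpow_le_rpow (by positivity) hdiv (by linarith)
    have e2 : ((max x R) / (max x r)) ^ (1 - s)
        = Real.exp (Real.log ((max x R) / (max x r)) * (1 - s)) :=
      Real.rpow_def_of_pos (by positivity) _
    have e3 : Real.log ((max x R) / (max x r))
        = Real.log (max x R) - Real.log (max x r) :=
      Real.log_div (ne_of_gt hA0) (ne_of_gt ha0)
    have e4 := Real.add_one_le_exp (Real.log ((max x R) / (max x r)) * (1 - s))
    rw [e3] at e4
    rw [e3] at e2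
    nlinarith [e1, e2, e4]
  -- key inequality
  have hkey : min 1 (2 * (1 - s)) * (2 - Real.log (max x r))
      ≤ (R / r) ^ (1 - s) * (2 - Real.log (max x R)) := by
    have hc1 : min 1 (2 * (1 - s)) ≤ 1 := min_le_left _ _
    have hc2 : min 1 (2 * (1 - s)) ≤ 2 * (1 - s) := min_le_right _ _
    set P := (R / r) ^ (1 - s) with hPdef
    set u := Real.log (max x R) - Real.log (max x r) with hudef
    set t := 2 - Real.log (max x R) with htdef
    have hu' : 0 ≤ u := by simp only [hudef]; linarith
    have ht' : 2 ≤ t := by simp only [htdef]; linarith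
    have h2la : 2 - Real.log (max x r) = t + u := by simp only [htdef, hudef]; ring
    rw [h2la]
    clear_value P u t
    nlinarith [mul_nonneg (by linarith : (0:ℝ) ≤ P - (1 + (1-s)*u)) (by linarith : (0:ℝ) ≤ t),
      mul_nonneg (mul_nonneg (by linarith : (0:ℝ) ≤ 1 - s) hu') (by linarith : (0:ℝ) ≤ t - 2),
      mul_le_mul_of_nonneg_right hc1 (by linarith : (0:ℝ) ≤ t),
      mul_le_mul_of_nonneg_right hc2 hu']
  -- assemble
  have hQpos : 0 < (R / r) ^ s := Real.rpow_pos_of_pos (div_pos hR hr) s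
  have hPRr : (R / r) ^ (1 - s) * (R / r) ^ s = R / r := by
    rw [← Real.rpow_add (div_pos hR hr)]
    norm_num
  have step1 : min 1 (2 * (1 - s)) / 64 * (R / r) ^ s * (myμ (ball x r)).toReal
      ≤ min 1 (2 * (1 - s)) / 64 * (R / r) ^ s * (8 * (r * (2 - Real.log (max x r)))) :=
    mul_le_mul_of_nonneg_left h1 (by positivity)
  have step2 : min 1 (2 * (1 - s)) * (2 - Real.log (max x r)) * (r * (R / r) ^ s / 8)
      ≤ (R / r) ^ (1 - s) * (2 - Real.log (max x R)) * (r * (R / r) ^ s / 8) :=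
    mul_le_mul_of_nonneg_right hkey (by positivity)
  have e5 : min 1 (2 * (1 - s)) / 64 * (R / r) ^ s * (8 * (r * (2 - Real.log (max x r))))
      = min 1 (2 * (1 - s)) * (2 - Real.log (max x r)) * (r * (R / r) ^ s / 8) := by ring
  have e6 : (R / r) ^ (1 - s) * (2 - Real.log (max x R)) * (r * (R / r) ^ s / 8)
      = R * (2 - Real.log (max x R)) / 8 := by
    have : (R / r) ^ (1 - s) * (R / r) ^ s * r = R := by
      rw [hPRr]; field_simp
    nlinarith [this]
  calc min 1 (2 * (1 - s)) / 64 * (R / r) ^ s * (myμ (ball x r)).toReal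
      ≤ min 1 (2 * (1 - s)) / 64 * (R / r) ^ s * (8 * (r * (2 - Real.log (max x r)))) := step1
    _ = min 1 (2 * (1 - s)) * (2 - Real.log (max x r)) * (r * (R / r) ^ s / 8) := e5
    _ ≤ (R / r) ^ (1 - s) * (2 - Real.log (max x R)) * (r * (R / r) ^ s / 8) := step2
    _ = R * (2 - Real.log (max x R)) / 8 := e6
    _ ≤ (myμ (ball x R)).toReal := h2

lemma mB_zero {r : ℝ} (hr : 0 < r) (hr1 : r ≤ 1) : (myμ (ball 0 r)).toReal = g r := by
  rw [mB_eq 0 hr.le, show (0:ℝ) + r = r by ring, show (0:ℝ) - r = -r by ring,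
    Fc_eq hr.le hr1, Fc_of_nonpos (by linarith)]
  ring

lemma mB_zero_le_one (r : ℝ) : (myμ (ball 0 r)).toReal ≤ 1 := by
  have h1 : myμ (ball 0 r) ≤ 1 := prob_le_one
  calc (myμ (ball 0 r)).toReal ≤ (1 : ENNReal).toReal := ENNReal.toReal_mono (by norm_num) h1
    _ = 1 := by norm_num

/-- no s ≥ 1 in lower Assouad set -/
lemma lower_lt_one : ∀ s ∈ lowerASet myμ, s < 1 := by
  intro s hs
  by_contra hcon
  push_neg at hcon
  obtain ⟨-, c₁, hc₁, c₂, hc₂, h⟩ := hs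
  set R := min c₁ 1 with hRdef
  have hR : 0 < R := lt_min hc₁ one_pos
  have hR1 : R ≤ 1 := min_le_right _ _
  set r := min R (Real.exp (1 - 2 / (c₂ * R))) with hrdef
  have hr : 0 < r := lt_min hR (Real.exp_pos _)
  have hrR : r ≤ R := min_le_left _ _
  have hr1 : r ≤ 1 := le_trans hrR hR1
  have hmem0 : (0:ℝ) ∈ msupp myμ := Icc_subset_msupp ⟨le_rfl, zero_le_one⟩
  have h0 := h 0 hmem0 r R hr hrR (min_le_left _ _)
  rw [mB_zero hr hr1] at h0
  have hy : Real.log r ≤ 1 - 2 / (c₂ * R) := by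
    calc Real.log r ≤ Real.log (Real.exp (1 - 2 / (c₂ * R))) :=
          Real.log_le_log hr (min_le_right _ _)
      _ = 1 - 2 / (c₂ * R) := Real.log_exp _
  have hQ : R / r ≤ (R / r) ^ s := by
    have h1 : (1:ℝ) ≤ R / r := (one_le_div hr).2 hrR
    calc R / r = (R / r) ^ (1:ℝ) := (Real.rpow_one _).symm
      _ ≤ (R / r) ^ s := Real.rpow_le_rpow_of_exponent_le h1 hcon
  have hGnn : 0 ≤ g r := by
    have : Real.log r ≤ 0 := Real.log_nonpos hr.le hr1
    simp only [g]; nlinarith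
  have step1 : c₂ * (R / r) * g r ≤ c₂ * (R / r) ^ s * g r :=
    mul_le_mul_of_nonneg_right (mul_le_mul_of_nonneg_left hQ hc₂.le) hGnn
  have step2 : c₂ * (R / r) * g r = c₂ * R * (2 - Real.log r) / 2 := by
    simp only [g]
    field_simp
  have step3 : c₂ * R * (1 + 2 / (c₂ * R)) / 2 ≤ c₂ * R * (2 - Real.log r) / 2 := by
    have h1 : 1 + 2 / (c₂ * R) ≤ 2 - Real.log r := by linarith
    have := mul_le_mul_of_nonneg_left h1 (by positivity : (0:ℝ) ≤ c₂ * R)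
    linarith
  have step4 : c₂ * R * (1 + 2 / (c₂ * R)) / 2 = c₂ * R / 2 + 1 := by
    field_simp
  have hle1 := mB_zero_le_one R
  have hfin : c₂ * R / 2 + 1 ≤ 1 := by
    calc c₂ * R / 2 + 1 = c₂ * R * (1 + 2 / (c₂ * R)) / 2 := step4.symm
      _ ≤ c₂ * R * (2 - Real.log r) / 2 := step3
      _ = c₂ * (R / r) * g r := step2.symm
      _ ≤ c₂ * (R / r) ^ s * g r := step1
      _ ≤ (myμ (ball 0 R)).toReal := h0
      _ ≤ 1 := mB_zero_le_one R
  nlinarith [mul_pos hc₂ hR]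

/-- every s in the upper Assouad set is ≥ 1 -/
lemma upper_ge_one : ∀ s ∈ upperASet myμ, 1 ≤ s := by
  intro s hs
  by_contra hcon
  push_neg at hcon
  obtain ⟨hs0, c₁, hc₁, c₂, hc₂, h⟩ := hs
  have hε : 0 < 1 - s := by linarith
  set R := min c₁ 1 with hRdef
  have hR : 0 < R := lt_min hc₁ one_pos
  have hR1 : R ≤ 1 := min_le_right _ _
  have hRs : 0 < R ^ s := Real.rpow_pos_of_pos hR s
  set δ := R / (64 * c₂ * R ^ s) with hδdef
  have hδ : 0 < δ := by positivity
  set r := min R ((δ / 2) ^ (1 / (1 - s) : ℝ)) with hrdef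
  have hr : 0 < r := lt_min hR (Real.rpow_pos_of_pos (by positivity) _)
  have hrR : r ≤ R := min_le_left _ _
  have hr1 : r ≤ 1 := le_trans hrR hR1
  have hmem1 : (1:ℝ) ∈ msupp myμ := Icc_subset_msupp ⟨zero_le_one, le_rfl⟩
  have h1 := h 1 hmem1 r R hr hrR (min_le_left _ _)
  have hmaxR : max (1:ℝ) R = 1 := max_eq_left hR1
  have hmaxr : max (1:ℝ) r = 1 := max_eq_left hr1
  have hlo := mB_lower zero_le_one (le_refl (1:ℝ)) hR hR1
  have hhi := mB_upper zero_le_one (le_refl (1:ℝ)) hr hr1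
  rw [hmaxR, Real.log_one] at hlo
  rw [hmaxr, Real.log_one] at hhi
  norm_num at hlo hhi
  -- hlo : R * (2 - 0) / 8 ≤ mB(1,R), hhi : mB(1,r) ≤ 8 * (r * (2 - 0))
  have hQpos : (0:ℝ) ≤ (R / r) ^ s := (Real.rpow_pos_of_pos (div_pos hR hr) s).le
  have hstep : R / 4 ≤ c₂ * (R / r) ^ s * (16 * r) := by
    calc R / 4 ≤ (myμ (ball 1 R)).toReal := by linarith [hlo]
      _ ≤ c₂ * (R / r) ^ s * (myμ (ball 1 r)).toReal := h1
      _ ≤ c₂ * (R / r) ^ s * (8 * (r * 2)) :=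
          mul_le_mul_of_nonneg_left hhi (by positivity)
      _ = c₂ * (R / r) ^ s * (16 * r) := by ring
  have hid : (R / r) ^ s * r = R ^ s * r ^ (1 - s : ℝ) := by
    rw [Real.div_rpow hR.le hr.le, Real.rpow_sub hr, Real.rpow_one]
    have hrs : r ^ s ≠ 0 := ne_of_gt (Real.rpow_pos_of_pos hr s)
    field_simp
  have hineq : R ≤ 64 * c₂ * (R ^ s * r ^ (1 - s : ℝ)) := by
    have : R / 4 ≤ 16 * c₂ * ((R / r) ^ s * r) := by linarith [hstep]
    rw [hid] at this
    linarith
  have hup : r ^ (1 - s : ℝ) ≤ δ / 2 := by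
    have h1' : r ^ (1 - s : ℝ) ≤ ((δ / 2) ^ (1 / (1 - s) : ℝ)) ^ (1 - s : ℝ) :=
      Real.rpow_le_rpow hr.le (min_le_right _ _) hε.le
    have h2' : ((δ / 2) ^ (1 / (1 - s) : ℝ)) ^ (1 - s : ℝ) = δ / 2 := by
      rw [← Real.rpow_mul (by positivity : (0:ℝ) ≤ δ / 2),
        one_div_mul_cancel (ne_of_gt hε), Real.rpow_one]
    rw [h2'] at h1'
    exact h1'
  have hdn : δ ≤ r ^ (1 - s : ℝ) := by
    rw [hδdef, div_le_iff₀ (by positivity)]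
    calc R ≤ 64 * c₂ * (R ^ s * r ^ (1 - s : ℝ)) := hineq
      _ = r ^ (1 - s : ℝ) * (64 * c₂ * R ^ s) := by ring
  linarith


lemma diam_msupp : diam (msupp myμ) = 1 := by
  apply le_antisymm
  · calc diam (msupp myμ) ≤ diam (Icc (0:ℝ) 1) :=
        diam_mono msupp_subset_Icc (isBounded_Icc 0 1)
      _ = 1 := by rw [Real.diam_Icc zero_le_one]; norm_num
  · have hb : Bornology.IsBounded (msupp myμ) :=
      (isBounded_Icc (0:ℝ) 1).subset msupp_subset_Icc
    have h0 : (0:ℝ) ∈ msupp myμ := Icc_subset_msupp ⟨le_rfl, zero_le_one⟩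
    have h1 : (1:ℝ) ∈ msupp myμ := Icc_subset_msupp ⟨zero_le_one, le_rfl⟩
    have := dist_le_diam_of_mem hb h0 h1
    rwa [Real.dist_eq, show |(0:ℝ) - 1| = 1 by norm_num] at this

lemma mB_one_lower {r : ℝ} (hr : 0 < r) (hr1 : r ≤ 1) :
    r / 4 ≤ (myμ (ball 1 r)).toReal := by
  have := mB_lower zero_le_one (le_refl (1:ℝ)) hr hr1
  rw [max_eq_left hr1, Real.log_one] at this
  linarith

lemma mB_one_upper {r : ℝ} (hr : 0 < r) (hr1 : r ≤ 1) :
    (myμ (ball 1 r)).toReal ≤ 16 * r := by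
  have := mB_upper zero_le_one (le_refl (1:ℝ)) hr hr1
  rw [max_eq_left hr1, Real.log_one] at this
  linarith

lemma ball_ne_top (x r : ℝ) : myμ (ball x r) ≠ ⊤ :=
  ne_of_lt (lt_of_le_of_lt prob_le_one (by norm_num))

lemma not_reg : ∀ s : ℝ, 0 ≤ s → ¬ IsSRegular myμ s := by
  intro s hs hreg
  obtain ⟨c, hc, h⟩ := hreg
  rw [diam_msupp] at h
  have hmem0 : (0:ℝ) ∈ msupp myμ := Icc_subset_msupp ⟨le_rfl, zero_le_one⟩
  have hmem1 : (1:ℝ) ∈ msupp myμ := Icc_subset_msupp ⟨zero_le_one, le_rfl⟩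
  rcases lt_trichotomy s 1 with hlt | heq | hgt
  · -- s < 1 : lower regularity bound at x = 1 fails for small r
    set r := min (1/2 : ℝ) ((1 / (32 * c)) ^ (1 / (1 - s) : ℝ)) with hrdef
    have hε : 0 < 1 - s := by linarith
    have hr : 0 < r := lt_min (by norm_num) (Real.rpow_pos_of_pos (by positivity) _)
    have hrhalf : r ≤ 1/2 := min_le_left _ _
    have hr1 : r < 1 := lt_of_le_of_lt hrhalf (by norm_num)
    have hrs : 0 < r ^ s := Real.rpow_pos_of_pos hr s
    have h1 := (h 1 hmem1 r hr hr1).1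
    have hlow : c⁻¹ * r ^ s ≤ (myμ (ball 1 r)).toReal := by
      have := ENNReal.toReal_mono (ball_ne_top 1 r) h1
      rwa [ENNReal.toReal_ofReal (by positivity)] at this
    have hup := mB_one_upper hr hr1.le
    -- r ^ s ≤ 16 c r
    have hrs16 : r ^ s ≤ 16 * c * r := by
      have := mul_le_mul_of_nonneg_left (le_trans hlow hup) hc.le
      rw [← mul_assoc, mul_inv_cancel₀ (ne_of_gt hc), one_mul] at this
      linarith
    -- hence 1/(16c) ≤ r^(1-s)
    have hlb : 1 / (16 * c) ≤ r ^ (1 - s : ℝ) := by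
      have hrw : r ^ (1 - s : ℝ) = r / r ^ s := by
        rw [Real.rpow_sub hr, Real.rpow_one]
      rw [hrw, div_le_div_iff₀ (by positivity) hrs]
      calc 1 * r ^ s = r ^ s := by ring
        _ ≤ 16 * c * r := hrs16
        _ = r * (16 * c) := by ring
    have hub : r ^ (1 - s : ℝ) ≤ 1 / (32 * c) := by
      have h1' : r ^ (1 - s : ℝ) ≤ ((1 / (32 * c)) ^ (1 / (1 - s) : ℝ)) ^ (1 - s : ℝ) :=
        Real.rpow_le_rpow hr.le (min_le_right _ _) hε.le
      have h2' : ((1 / (32 * c)) ^ (1 / (1 - s) : ℝ)) ^ (1 - s : ℝ) = 1 / (32 * c) := by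
        rw [← Real.rpow_mul (by positivity : (0:ℝ) ≤ 1 / (32 * c)),
          one_div_mul_cancel (ne_of_gt hε), Real.rpow_one]
      rw [h2'] at h1'
      exact h1'
    have : 1 / (16 * c) ≤ 1 / (32 * c) := le_trans hlb hub
    rw [div_le_div_iff₀ (by positivity) (by positivity)] at this
    nlinarith
  · -- s = 1 : upper regularity bound at x = 0 fails
    subst heq
    set r := min (1/2 : ℝ) (Real.exp (-2 * c)) with hrdef
    have hr : 0 < r := lt_min (by norm_num) (Real.exp_pos _)
    have hrhalf : r ≤ 1/2 := min_le_left _ _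
    have hr1 : r < 1 := lt_of_le_of_lt hrhalf (by norm_num)
    have h1 := (h 0 hmem0 r hr hr1).2
    have hup : (myμ (ball 0 r)).toReal ≤ c * r ^ (1:ℝ) := by
      have := ENNReal.toReal_mono (by simp) h1
      rwa [ENNReal.toReal_ofReal (by positivity)] at this
    rw [Real.rpow_one, mB_zero hr hr1.le] at hup
    have hy : Real.log r ≤ -2 * c := by
      calc Real.log r ≤ Real.log (Real.exp (-2 * c)) :=
            Real.log_le_log hr (min_le_right _ _)
        _ = -2 * c := Real.log_exp _
    have hglow : r * (1 + c) ≤ g r := by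
      simp only [g]
      nlinarith [mul_le_mul_of_nonneg_left hy hr.le]
    nlinarith
  · -- s > 1 : lower regularity bound at x = 1 fails? (upper at small r)
    set r := min (1/2 : ℝ) ((1 / (8 * c)) ^ (1 / (s - 1) : ℝ)) with hrdef
    have hε : 0 < s - 1 := by linarith
    have hr : 0 < r := lt_min (by norm_num) (Real.rpow_pos_of_pos (by positivity) _)
    have hrhalf : r ≤ 1/2 := min_le_left _ _
    have hr1 : r < 1 := lt_of_le_of_lt hrhalf (by norm_num)
    have hrs : 0 < r ^ s := Real.rpow_pos_of_pos hr s
    have h1 := (h 1 hmem1 r hr hr1).2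
    have hup : (myμ (ball 1 r)).toReal ≤ c * r ^ s := by
      have := ENNReal.toReal_mono (by simp) h1
      rwa [ENNReal.toReal_ofReal (by positivity)] at this
    have hlow := mB_one_lower hr hr1.le
    -- r ≤ 4 c r^s
    have hr4 : r ≤ 4 * c * r ^ s := by linarith
    -- hence 1/(4c) ≤ r^(s-1)
    have hlb : 1 / (4 * c) ≤ r ^ (s - 1 : ℝ) := by
      have hrw : r ^ (s - 1 : ℝ) = r ^ s / r := by
        rw [Real.rpow_sub hr, Real.rpow_one]
      rw [hrw, div_le_div_iff₀ (by positivity) hr]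
      calc 1 * r = r := by ring
        _ ≤ 4 * c * r ^ s := hr4
        _ = r ^ s * (4 * c) := by ring
    have hub : r ^ (s - 1 : ℝ) ≤ 1 / (8 * c) := by
      have h1' : r ^ (s - 1 : ℝ) ≤ ((1 / (8 * c)) ^ (1 / (s - 1) : ℝ)) ^ (s - 1 : ℝ) :=
        Real.rpow_le_rpow hr.le (min_le_right _ _) hε.le
      have h2' : ((1 / (8 * c)) ^ (1 / (s - 1) : ℝ)) ^ (s - 1 : ℝ) = 1 / (8 * c) := by
        rw [← Real.rpow_mul (by positivity : (0:ℝ) ≤ 1 / (8 * c)),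
          one_div_mul_cancel (ne_of_gt hε), Real.rpow_one]
      rw [h2'] at h1'
      exact h1'
    have : 1 / (4 * c) ≤ 1 / (8 * c) := le_trans hlb hub
    rw [div_le_div_iff₀ (by positivity) (by positivity)] at this
    nlinarith

theorem exists_measure_equal_assouad_dims_not_regular :
    ∃ μ : Measure ℝ, IsProbabilityMeasure μ ∧ msupp μ ⊆ Set.Icc 0 1 ∧
      dimL μ = 1 ∧ dimA μ = 1 ∧ ∀ s : ℝ, 0 ≤ s → ¬ IsSRegular μ s := by
  refine ⟨myμ, inferInstance, msupp_subset_Icc, ?_, ?_, not_reg⟩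
  · -- dimL = 1
    have hub : ∀ s ∈ lowerASet myμ, s ≤ 1 := fun s hs => (lower_lt_one s hs).le
    have hbdd : BddAbove (lowerASet myμ) := ⟨1, hub⟩
    have hmem : ∀ s : ℝ, 0 ≤ s → s < 1 → s ∈ lowerASet myμ := fun s h1 h2 => mem_lower h1 h2
    have h0 : (0:ℝ) ∈ lowerASet myμ := hmem 0 le_rfl one_pos
    apply le_antisymm
    · exact csSup_le ⟨0, h0⟩ hub
    · by_contra hcon
      push_neg at hcon
      set t := max 0 ((sSup (lowerASet myμ) + 1) / 2) with htdef
      have ht0 : 0 ≤ t := le_max_left _ _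
      have ht1 : t < 1 := max_lt one_pos (by dsimp [dimL] at hcon; linarith)
      have hle : t ≤ sSup (lowerASet myμ) := le_csSup hbdd (hmem t ht0 ht1)
      have hge : (sSup (lowerASet myμ) + 1) / 2 ≤ t := le_max_right _ _
      dsimp [dimL] at hcon
      linarith
  · -- dimA = 1
    exact le_antisymm (csInf_le ⟨1, upper_ge_one⟩ one_mem_upper)
      (le_csInf ⟨1, one_mem_upper⟩ upper_ge_one)
end
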